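/- arXiv:1601.06158 — 2 statements merged into one kernel-verified Lean document; each statement's English description precedes it below -/
import Mathlib

section
/- The large Schröder numbers satisfy the quadratic recurrence relation induced by their generating function: for all n ≥ 1, the Schröder number S(n) equals S(n-1) plus the sum over i+j = n-1 of S(i)·S(j). Here S(0)=1. -/
open Finset PowerSeries

/-- Large Schröder numbers. -/
def schroeder : ℕ → ℕ
  | 0 => 1
  | n + 1 => schroeder n + ∑ i : Fin (n + 1), schroeder i * schroeder (n - i)

/-- The points visited by a path (a list of steps) starting at (0,0). -/
def pts (l : List (ℤ × ℤ)) : List (ℤ × ℤ) :=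
  l.scanl (fun p s => (p.1 + s.1, p.2 + s.2)) (0, 0)

/-- The endpoint of a path starting at (0,0). -/
def endPt (l : List (ℤ × ℤ)) : ℤ × ℤ :=
  ((l.map Prod.fst).sum, (l.map Prod.snd).sum)

/-- All steps are unit steps (1,0) or (0,1). -/
def unitSteps (l : List (ℤ × ℤ)) : Prop := ∀ s ∈ l, s = (1, 0) ∨ s = (0, 1)

/-- All steps are (1,0), (0,1) or (1,1). -/
def schSteps (l : List (ℤ × ℤ)) : Prop := ∀ s ∈ l, s = (1, 0) ∨ s = (0, 1) ∨ s = (1, 1)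

/-- The path stays weakly below the diagonal y = x. -/
def weaklyBelow (l : List (ℤ × ℤ)) : Prop := ∀ p ∈ pts l, p.2 ≤ p.1

/-- The path stays strictly below the diagonal except at its start (0,0). -/
def strictBelowAfterStart (l : List (ℤ × ℤ)) : Prop :=
  ∀ p ∈ pts l, p ≠ (0, 0) → p.2 < p.1

/-- Validity of a path starting at point `p` in a lattice where steps (1,0) and (0,1)
are allowed everywhere and the diagonal step (1,1) is allowed exactly from points
satisfying `D`. -/
def okFrom (D : ℤ × ℤ → Prop) : ℤ × ℤ → List (ℤ × ℤ) → Prop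
  | _, [] => True
  | p, s :: l => (s = (1, 0) ∨ s = (0, 1) ∨ (s = (1, 1) ∧ D p)) ∧
      okFrom D (p.1 + s.1, p.2 + s.2) l

/-- Paths from (0,0) to (n,k) in the Catalan–Schröder lattice L_CS:
diagonal steps allowed from points (a,b) with b ≥ a. -/
def LCS (n k : ℕ) : Set (List (ℤ × ℤ)) :=
  {l | okFrom (fun p => p.1 ≤ p.2) (0, 0) l ∧ endPt l = ((n : ℤ), (k : ℤ))}

/-- Paths from (0,0) to (n,k) in the lattice L*_CS:
diagonal steps allowed only from points (a,b) with b > a. -/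
def LCSstar (n k : ℕ) : Set (List (ℤ × ℤ)) :=
  {l | okFrom (fun p => p.1 < p.2) (0, 0) l ∧ endPt l = ((n : ℤ), (k : ℤ))}

/-- Weakly subdiagonal unit-step paths from (0,0) to (n,k). -/
def CPath (n k : ℕ) : Set (List (ℤ × ℤ)) :=
  {l | unitSteps l ∧ endPt l = ((n : ℤ), (k : ℤ)) ∧ weaklyBelow l}

/-- Weakly subdiagonal paths from (0,0) to (n,k) with steps (1,0),(0,1),(1,1). -/
def SPath (n k : ℕ) : Set (List (ℤ × ℤ)) :=
  {l | schSteps l ∧ endPt l = ((n : ℤ), (k : ℤ)) ∧ weaklyBelow l}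

/-- Number of paths from (0,0) to (n,n) in L_CS. -/
noncomputable def fCS (n : ℕ) : ℕ := Nat.card ↥(LCS n n)

/-- Number of paths from (0,0) to (n,n) in L*_CS. -/
noncomputable def fCSstar (n : ℕ) : ℕ := Nat.card ↥(LCSstar n n)

/-- Generating function of the Catalan numbers. -/
noncomputable def catalanGF : PowerSeries ℤ := PowerSeries.mk fun n => (catalan n : ℤ)

/-- Generating function of the large Schröder numbers. -/
noncomputable def schroederGF : PowerSeries ℤ := PowerSeries.mk fun n => (schroeder n : ℤ)

/-- Generating function F(x) of diagonal path counts in L_CS. -/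
noncomputable def FGF : PowerSeries ℤ := PowerSeries.mk fun n => (fCS n : ℤ)

/-- Generating function F*(x) of diagonal path counts in L*_CS. -/
noncomputable def FstarGF : PowerSeries ℤ := PowerSeries.mk fun n => (fCSstar n : ℤ)

/-- Substitution x ↦ x² in a formal power series: g(x²). -/
noncomputable def subSq (g : PowerSeries ℤ) : PowerSeries ℤ :=
  PowerSeries.mk fun n => if 2 ∣ n then PowerSeries.coeff (R := ℤ) (n / 2) g else 0

/-- Substitution x ↦ x³ in a formal power series: g(x³). -/
noncomputable def subCube (g : PowerSeries ℤ) : PowerSeries ℤ :=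
  PowerSeries.mk fun n => if 3 ∣ n then PowerSeries.coeff (R := ℤ) (n / 3) g else 0

namespace SchroederAux

lemma endPt_eq_sum (l : List (ℤ × ℤ)) : endPt l = l.sum := by
  induction l with
  | nil => rfl
  | cons s t ih =>
    simp only [endPt, List.map_cons, List.sum_cons] at *
    rw [Prod.ext_iff] at *
    simpa using ih

lemma pts_eq (l : List (ℤ × ℤ)) : pts l = l.scanl (· + ·) (0, 0) := rfl

lemma scanl_add (l : List (ℤ × ℤ)) (p : ℤ × ℤ) :
    l.scanl (· + ·) p = (l.scanl (· + ·) (0, 0)).map (p + ·) := by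
  induction l generalizing p with
  | nil => simp
  | cons s t ih =>
    simp only [List.scanl_cons, List.map_cons]
    rw [show p + (0,0) = p by simp]
    refine congrArg _ ?_
    rw [ih (p + s), ih ((0,0) + s), List.map_map]
    congr 1
    funext q
    simp [add_assoc]

lemma pts_cons (s : ℤ × ℤ) (l : List (ℤ × ℤ)) :
    pts (s :: l) = (0, 0) :: (pts l).map (s + ·) := by
  rw [pts_eq, pts_eq, List.scanl_cons]
  rw [show (0,0) + s = s by simp, scanl_add l s]

lemma zero_mem_pts (l : List (ℤ × ℤ)) : (0, 0) ∈ pts l := by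
  cases l with
  | nil => simp [pts]
  | cons s t => rw [pts_cons]; exact List.mem_cons_self

lemma mem_pts {l : List (ℤ × ℤ)} {p : ℤ × ℤ} :
    p ∈ pts l ↔ ∃ j ≤ l.length, (l.take j).sum = p := by
  induction l generalizing p with
  | nil => simp [pts, eq_comm]; rfl
  | cons s t ih =>
    rw [pts_cons]
    simp only [List.mem_cons, List.mem_map, ih]
    constructor
    · rintro (rfl | ⟨q, ⟨j, hj, rfl⟩, rfl⟩)
      · exact ⟨0, by simp, by simp; rfl⟩
      · exact ⟨j + 1, by simpa using hj, by simp⟩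
    · rintro ⟨j, hj, rfl⟩
      cases j with
      | zero => left; simp; rfl
      | succ j => right; exact ⟨(t.take j).sum, ⟨j, by simpa using hj, rfl⟩, by simp⟩

lemma pts_append {A B : List (ℤ × ℤ)} {p : ℤ × ℤ} :
    p ∈ pts (A ++ B) ↔ p ∈ pts A ∨ ∃ q ∈ pts B, p = A.sum + q := by
  simp only [mem_pts]
  constructor
  · rintro ⟨j, hj, rfl⟩
    rcases le_or_gt j A.length with h | h
    · left; exact ⟨j, h, by rw [List.take_append_of_le_length h]⟩
    · right
      refine ⟨(B.take (j - A.length)).sum, ⟨j - A.length, by simp at hj; omega, rfl⟩, ?_⟩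
      rw [List.take_append, List.take_of_length_le (le_of_lt h),
        List.sum_append]
  · rintro (⟨j, hj, rfl⟩ | ⟨q, ⟨j, hj, rfl⟩, rfl⟩)
    · exact ⟨j, by simp; omega, by rw [List.take_append_of_le_length hj]⟩
    · refine ⟨A.length + j, by simpa using Nat.add_le_add_left hj A.length, ?_⟩
      rw [List.take_append, List.take_of_length_le (by omega),
        List.sum_append, Nat.add_sub_cancel_left]



lemma sum_stats {l : List (ℤ × ℤ)} (h : schSteps l) :
    0 ≤ l.sum.1 ∧ 0 ≤ l.sum.2 ∧ (l.length : ℤ) ≤ l.sum.1 + l.sum.2 := by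
  induction l with
  | nil => simp
  | cons s t ih =>
    have hs := h s List.mem_cons_self
    have ht := ih (fun x hx => h x (List.mem_cons_of_mem _ hx))
    simp only [List.sum_cons, List.length_cons, Prod.fst_add, Prod.snd_add]
    rcases hs with rfl | rfl | rfl <;> push_cast <;> constructor <;> try constructor
    all_goals simp_all <;> omega

lemma mem_SPath_iff {n k : ℕ} {l : List (ℤ × ℤ)} :
    l ∈ SPath n k ↔ schSteps l ∧ l.sum = ((n : ℤ), (k : ℤ)) ∧ weaklyBelow l := by
  rw [SPath, Set.mem_setOf_eq, endPt_eq_sum]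

noncomputable def enc : ℤ × ℤ → Fin 3 := fun s => if s = (1,0) then 0 else if s = (0,1) then 1 else 2

def dec : Fin 3 → ℤ × ℤ := ![(1,0),(0,1),(1,1)]

lemma dec_enc {s : ℤ × ℤ} (h : s = (1,0) ∨ s = (0,1) ∨ s = (1,1)) : dec (enc s) = s := by
  rcases h with rfl | rfl | rfl <;> simp [enc, dec, Prod.ext_iff]

lemma spath_finite (n k : ℕ) : (SPath n k).Finite := by
  have hsub : (List.map enc) '' (SPath n k) ⊆ {L : List (Fin 3) | L.length ≤ n + k} := by
    rintro L ⟨l, hl, rfl⟩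
    rw [mem_SPath_iff] at hl
    have := sum_stats hl.1
    rw [hl.2.1] at this
    simp only [Set.mem_setOf_eq, List.length_map]
    have : (l.length : ℤ) ≤ (n : ℤ) + k := this.2.2
    exact_mod_cast this
  have hinj : Set.InjOn (List.map enc) (SPath n k) := by
    intro l1 h1 l2 h2 he
    rw [mem_SPath_iff] at h1 h2
    have e1 : l1.map (dec ∘ enc) = l1 :=
      (List.map_congr_left fun s hs => dec_enc (h1.1 s hs)).trans (List.map_id _)
    have e2 : l2.map (dec ∘ enc) = l2 :=
      (List.map_congr_left fun s hs => dec_enc (h2.1 s hs)).trans (List.map_id _)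
    rw [← e1, ← e2, ← List.map_map, ← List.map_map, he]
  exact Set.Finite.of_finite_image ((List.finite_length_le (Fin 3) (n+k)).subset hsub) hinj

instance spath_finite' (n k : ℕ) : Finite ↥(SPath n k) := (spath_finite n k).to_subtype

lemma card_sigma_eq {m : ℕ} (f : Fin m → Type*) [∀ i, Finite (f i)] :
    Nat.card (Σ i, f i) = ∑ i, Nat.card (f i) := by
  have : ∀ i, Fintype (f i) := fun i => Fintype.ofFinite _
  simp [Nat.card_eq_fintype_card, Fintype.card_sigma]

def Idx (m : ℕ) : Type :=
  ↥(SPath m m) ⊕ (Σ i : Fin (m + 1), ↥(SPath i i) × ↥(SPath (m - i) (m - i)))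

instance (m : ℕ) : Finite (Idx m) := by unfold Idx; infer_instance

def glue (m : ℕ) : Idx m → List (ℤ × ℤ)
  | .inl A => (1, 1) :: A.1
  | .inr ⟨_, A, B⟩ => (1, 0) :: (A.1 ++ (0, 1) :: B.1)

lemma glue_mem (m : ℕ) (x : Idx m) : glue m x ∈ SPath (m + 1) (m + 1) := by
  rcases x with A | ⟨i, A, B⟩
  · obtain ⟨hsch, hsum, hbel⟩ := mem_SPath_iff.mp A.2
    rw [glue, mem_SPath_iff]
    refine ⟨?_, ?_, ?_⟩
    · intro s hs
      rcases List.mem_cons.mp hs with rfl | hs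
      · tauto
      · exact hsch s hs
    · rw [List.sum_cons, hsum, Prod.ext_iff]
      simp only [Prod.fst_add, Prod.snd_add]
      push_cast; constructor <;> ring
    · intro p hp
      rw [pts_cons] at hp
      simp only [List.mem_cons, List.mem_map] at hp
      rcases hp with rfl | ⟨q, hq, rfl⟩
      · simp
      · have := hbel q hq
        simp only [Prod.fst_add, Prod.snd_add]
        omega
  · obtain ⟨hschA, hsumA, hbelA⟩ := mem_SPath_iff.mp A.2
    obtain ⟨hschB, hsumB, hbelB⟩ := mem_SPath_iff.mp B.2
    have him : (i : ℕ) ≤ m := Nat.lt_succ_iff.mp i.2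
    have hcast : ((m - (i : ℕ) : ℕ) : ℤ) = (m : ℤ) - (i : ℕ) := by
      rw [Nat.cast_sub him]
    rw [glue, mem_SPath_iff]
    refine ⟨?_, ?_, ?_⟩
    · intro s hs
      rcases List.mem_cons.mp hs with rfl | hs
      · tauto
      · rcases List.mem_append.mp hs with hs | hs
        · exact hschA s hs
        · rcases List.mem_cons.mp hs with rfl | hs
          · tauto
          · exact hschB s hs
    · rw [List.sum_cons, List.sum_append, List.sum_cons, hsumA, hsumB, Prod.ext_iff]
      simp only [Prod.fst_add, Prod.snd_add]
      rw [hcast]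
      push_cast
      constructor <;> ring
    · intro p hp
      rw [pts_cons] at hp
      simp only [List.mem_cons, List.mem_map] at hp
      rcases hp with rfl | ⟨q, hq, rfl⟩
      · simp
      · rcases pts_append.mp hq with hq | ⟨r, hr, rfl⟩
        · have := hbelA q hq
          simp only [Prod.fst_add, Prod.snd_add]
          omega
        · rw [pts_cons] at hr
          simp only [List.mem_cons, List.mem_map] at hr
          rcases hr with rfl | ⟨u, hu, rfl⟩
          · rw [hsumA]
            simp
          · have := hbelB u hu
            rw [hsumA]
            simp only [Prod.fst_add, Prod.snd_add]
            omega

/-- key uniqueness: if `A ++ (0,1) :: B = A' ++ (0,1) :: B'` with `A, A'` diagonal-ending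
weakly-below paths, then the lengths agree. -/
lemma split_len_le {a b : ℕ} {A A' B B' : List (ℤ × ℤ)}
    (hA : A ∈ SPath a a) (hA' : A' ∈ SPath b b)
    (h : A ++ (0, 1) :: B = A' ++ (0, 1) :: B') : ¬ A.length < A'.length := by
  intro hlt
  obtain ⟨hsch, hsum, hbel⟩ := mem_SPath_iff.mp hA
  obtain ⟨hsch', hsum', hbel'⟩ := mem_SPath_iff.mp hA'
  set j := A.length with hj
  have htake : A'.take j = A := by
    have h1 : (A ++ (0, 1) :: B).take j = A := List.take_append_of_le_length le_rfl |>.trans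
      (by simp [hj])
    have h2 : (A' ++ (0, 1) :: B').take j = A'.take j :=
      List.take_append_of_le_length (le_of_lt hlt)
    rw [← h1, h, h2]
  have hget : A'[j]'hlt = (0, 1) := by
    have e : A'[j]? = some (0, 1) := by
      have e1 : (A' ++ (0, 1) :: B')[j]? = A'[j]? := by
        rw [List.getElem?_append]
        simp [hlt]
      rw [← e1, ← h, List.getElem?_append_right le_rfl]
      simp
    rw [List.getElem?_eq_getElem hlt] at e
    exact Option.some_injective _ e
  have hsumtake : (A'.take (j + 1)).sum = A.sum + (0, 1) := by
    rw [List.sum_take_succ _ _ hlt, htake, hget]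
  have hmem : (A'.take (j + 1)).sum ∈ pts A' := mem_pts.mpr ⟨j + 1, by omega, rfl⟩
  have := hbel' _ hmem
  rw [hsumtake, hsum] at this
  simp at this

lemma split_unique {a b : ℕ} {A A' B B' : List (ℤ × ℤ)}
    (hA : A ∈ SPath a a) (hA' : A' ∈ SPath b b)
    (h : A ++ (0, 1) :: B = A' ++ (0, 1) :: B') : A = A' ∧ B = B' := by
  have hlen : A.length = A'.length := by
    have h1 := split_len_le hA hA' h
    have h2 := split_len_le hA' hA h.symm
    omega
  obtain ⟨e1, e2⟩ := List.append_inj h hlen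
  exact ⟨e1, by simpa using e2⟩

lemma glue_inj (m : ℕ) : Function.Injective (glue m) := by
  rintro (A | ⟨i, A, B⟩) (A' | ⟨i', A', B'⟩) h
  · simp only [glue] at h
    injection h with _ h2
    exact congrArg Sum.inl (Subtype.ext h2)
  · simp only [glue] at h
    injection h with h1 _
    simp [Prod.ext_iff] at h1
  · simp only [glue] at h
    injection h with h1 _
    simp [Prod.ext_iff] at h1
  · simp only [glue] at h
    injection h with _ h2
    obtain ⟨eA, eB⟩ := split_unique A.2 A'.2 h2
    have hii : i = i' := by
      have s1 := (mem_SPath_iff.mp A.2).2.1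
      have s2 := (mem_SPath_iff.mp A'.2).2.1
      rw [eA, s2] at s1
      have : ((i' : ℕ) : ℤ) = ((i : ℕ) : ℤ) := congrArg Prod.fst s1
      exact Fin.ext (by exact_mod_cast this.symm)
    subst hii
    have : (⟨A, B⟩ : ↥(SPath i i) × ↥(SPath (m - i) (m - i))) = ⟨A', B'⟩ :=
      Prod.ext (Subtype.ext eA) (Subtype.ext eB)
    rw [this]

lemma glue_surj (m : ℕ) : ∀ l ∈ SPath (m + 1) (m + 1), ∃ x : Idx m, glue m x = l := by
  intro l hl
  obtain ⟨hsch, hsum, hbel⟩ := mem_SPath_iff.mp hl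
  cases l with
  | nil =>
    exfalso
    rw [List.sum_nil] at hsum
    have := congrArg Prod.fst hsum
    simp only [Prod.fst_zero] at this
    have h0 : (0 : ℤ) = (m : ℤ) + 1 := by exact_mod_cast this
    omega
  | cons s t =>
    rcases hsch s List.mem_cons_self with rfl | rfl | rfl
    · -- main case: first step (1,0)
      have hex : ∃ j, 1 ≤ j ∧ j ≤ ((1,0) :: t : List (ℤ × ℤ)).length ∧
          (((((1,0) :: t : List (ℤ × ℤ))).take j).sum).2 = (((((1,0) :: t : List (ℤ × ℤ))).take j).sum).1 := by
        refine ⟨((1,0) :: t : List (ℤ × ℤ)).length, by simp, le_rfl, ?_⟩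
        rw [List.take_length, hsum]
      classical
      have hk1 : 1 ≤ Nat.find hex := (Nat.find_spec hex).1
      have hk2 := (Nat.find_spec hex).2.1
      have hk3 := (Nat.find_spec hex).2.2
      have hmin : ∀ j, j < Nat.find hex → 1 ≤ j → j ≤ ((1,0) :: t : List (ℤ × ℤ)).length →
          (((((1,0) :: t : List (ℤ × ℤ))).take j).sum).2 ≠ (((((1,0) :: t : List (ℤ × ℤ))).take j).sum).1 :=
        fun j hj h1 h2 hd => Nat.find_min hex hj ⟨h1, h2, hd⟩
      have h2k : 2 ≤ Nat.find hex := by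
        rcases Nat.lt_or_ge (Nat.find hex) 2 with hlt | hge
        · exfalso
          have hk1' : Nat.find hex = 1 := by omega
          rw [hk1'] at hk3
          simp at hk3
        · exact hge
      obtain ⟨k', hkk⟩ : ∃ k', Nat.find hex = k' + 2 := ⟨Nat.find hex - 2, by omega⟩
      rw [hkk] at hk2 hk3 hmin
      have htl : k' + 1 ≤ t.length := by
        simp only [List.length_cons] at hk2
        omega
      set A := t.take k' with hA
      set B := t.drop (k' + 1) with hB
      have hkt : k' < t.length := by omega
      set w := t[k']'hkt with hw
      have hts : t.take (k' + 1) = A ++ [w] := by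
        rw [List.take_succ, hA, List.getElem?_eq_getElem hkt]
        rfl
      have hschA : schSteps A := fun x hx =>
        hsch x (List.mem_cons_of_mem _ (List.take_subset _ _ hx))
      have hschB : schSteps B := fun x hx =>
        hsch x (List.mem_cons_of_mem _ (List.drop_subset _ _ hx))
      -- rewrite hk3
      rw [show k' + 2 = (k' + 1) + 1 from rfl, List.take_succ_cons, hts] at hk3
      simp only [List.sum_cons, List.sum_append, List.sum_singleton, Prod.fst_add,
        Prod.snd_add] at hk3
      -- below/non-diag at k'+1
      have hbelu : ((Prod.mk (1:ℤ) (0:ℤ) + A.sum)).2 ≤ ((Prod.mk (1:ℤ) (0:ℤ) + A.sum)).1 := by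
        have hmem : ((Prod.mk (1:ℤ) (0:ℤ)) + A.sum) ∈ pts ((1,0) :: t) := by
          refine mem_pts.mpr ⟨k' + 1, by simp; omega, ?_⟩
          rw [List.take_succ_cons, List.sum_cons, hA]
        exact hbel _ hmem
      have hneu : ((Prod.mk (1:ℤ) (0:ℤ) + A.sum)).2 ≠ ((Prod.mk (1:ℤ) (0:ℤ) + A.sum)).1 := by
        have := hmin (k' + 1) (by omega) (by omega) (by simp; omega)
        rw [List.take_succ_cons, List.sum_cons] at this
        rw [hA]
        exact this
      simp only [Prod.fst_add, Prod.snd_add] at hbelu hneu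
      -- identify the step w
      have hwmem : w ∈ ((1,0) :: t : List (ℤ × ℤ)) :=
        List.mem_cons_of_mem _ (List.getElem_mem hkt)
      rcases hsch w hwmem with hw10 | hw01 | hw11
      · exfalso; rw [hw10] at hk3; simp at hk3; omega
      · -- w = (0,1), good
        rw [hw01] at hk3
        simp only [Prod.fst_add, Prod.snd_add] at hk3
        have hdiag : A.sum.1 = A.sum.2 := by simp at hk3; omega
        -- define i
        have hnn := sum_stats hschA
        set i : ℕ := (A.sum.2).toNat with hi
        have hAsum : A.sum = ((i : ℤ), (i : ℤ)) := by
          rw [Prod.ext_iff]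
          constructor
          · rw [hi, Int.toNat_of_nonneg hnn.2.1, hdiag]
          · rw [hi, Int.toNat_of_nonneg hnn.2.1]
        -- decomposition of t
        have hdec : t = A ++ (0, 1) :: B := by
          conv_lhs => rw [← List.take_append_drop (k' + 1) t]
          rw [hts, hw01, hB, List.append_assoc, List.singleton_append]
        -- i ≤ m
        have him : i ≤ m := by
          have hsplit := hsum
          conv at hsplit => lhs; rw [← List.take_append_drop (k' + 2) ((1,0) :: t)]
          rw [List.sum_append] at hsplit
          have hnnd := sum_stats (fun x hx =>
            hsch x (List.drop_subset _ _ hx) : schSteps (((1,0) :: t : List (ℤ × ℤ)).drop (k' + 2)))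
          rw [show k' + 2 = (k' + 1) + 1 from rfl, List.take_succ_cons, hts, hw01] at hsplit
          simp only [List.sum_cons, List.sum_append, List.sum_singleton] at hsplit
          rw [hAsum] at hsplit
          have h1 := congrArg Prod.fst hsplit
          simp only [Prod.fst_add] at h1
          have h1' : (1 : ℤ) + ((i : ℤ) + 0) + (((1,0) :: t : List (ℤ × ℤ)).drop (k' + 2)).sum.1
              = (m : ℤ) + 1 := by exact_mod_cast h1
          have h2' := hnnd.1
          omega
        have hcast : ((m - i : ℕ) : ℤ) = (m : ℤ) - (i : ℤ) := by
          rw [Nat.cast_sub him]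
        -- B sum
        have hBsum : B.sum = (((m - i : ℕ) : ℤ), ((m - i : ℕ) : ℤ)) := by
          rw [hdec] at hsum
          simp only [List.sum_cons, List.sum_append, hAsum] at hsum
          rw [Prod.ext_iff] at hsum ⊢
          simp only [Prod.fst_add, Prod.snd_add] at hsum
          rw [hcast]
          push_cast at hsum ⊢
          omega
        -- A membership
        have hAmem : A ∈ SPath i i := by
          rw [mem_SPath_iff]
          refine ⟨hschA, hAsum, ?_⟩
          intro p hp
          obtain ⟨j, hj, rfl⟩ := mem_pts.mp hp
          have hjk : j ≤ k' := le_trans hj (by rw [hA]; simpa using Nat.min_le_left _ _)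
          have hAj : A.take j = t.take j := by
            rw [hA, List.take_take, Nat.min_eq_left hjk]
          have hltake : (((1,0) :: t : List (ℤ × ℤ))).take (j + 1) = (1,0) :: A.take j := by
            rw [List.take_succ_cons, hAj]
          have hb := hbel _ (mem_pts.mpr ⟨j + 1, by simp; omega, rfl⟩)
          have hn := hmin (j + 1) (by omega) (by omega) (by simp; omega)
          rw [hltake, List.sum_cons] at hb hn
          simp only [Prod.fst_add, Prod.snd_add] at hb hn
          omega
        -- B membership
        have hBmem : B ∈ SPath (m - i) (m - i) := by
          rw [mem_SPath_iff]
          refine ⟨hschB, hBsum, ?_⟩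
          intro q hq
          have hmem : (Prod.mk (1:ℤ) (0:ℤ)) + (A.sum + ((0,1) + q)) ∈ pts ((1,0) :: t) := by
            rw [pts_cons, hdec]
            refine List.mem_cons_of_mem _ (List.mem_map.mpr ⟨A.sum + ((0,1) + q), ?_, rfl⟩)
            refine pts_append.mpr (Or.inr ⟨(0,1) + q, ?_, rfl⟩)
            rw [pts_cons]
            exact List.mem_cons_of_mem _ (List.mem_map.mpr ⟨q, hq, rfl⟩)
          have := hbel _ hmem
          rw [hAsum] at this
          simp only [Prod.fst_add, Prod.snd_add] at this
          omega
        refine ⟨.inr ⟨⟨i, by omega⟩, ⟨A, hAmem⟩, ⟨B, hBmem⟩⟩, ?_⟩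
        rw [glue, ← hdec]
      · exfalso; rw [hw11] at hk3; simp at hk3; omega
    · -- first step (0,1): impossible
      exfalso
      have hmem : ((0 : ℤ), (1 : ℤ)) ∈ pts ((0,1) :: t) := by
        rw [pts_cons]
        exact List.mem_cons_of_mem _ (List.mem_map.mpr ⟨(0,0), zero_mem_pts t, by simp⟩)
      have := hbel _ hmem
      norm_num at this
    · -- first step (1,1)
      refine ⟨.inl ⟨t, ?_⟩, rfl⟩
      rw [mem_SPath_iff]
      refine ⟨fun x hx => hsch x (List.mem_cons_of_mem _ hx), ?_, ?_⟩
      · rw [List.sum_cons] at hsum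
        rw [Prod.ext_iff] at hsum ⊢
        simp only [Prod.fst_add, Prod.snd_add] at hsum
        push_cast at hsum ⊢
        omega
      · intro q hq
        have hmem : ((1 : ℤ), (1 : ℤ)) + q ∈ pts ((1,1) :: t) := by
          rw [pts_cons]
          exact List.mem_cons_of_mem _ (List.mem_map.mpr ⟨q, hq, rfl⟩)
        have := hbel _ hmem
        simp only [Prod.fst_add, Prod.snd_add] at this
        omega

lemma card_succ (m : ℕ) :
    Nat.card ↥(SPath (m + 1) (m + 1)) =
      Nat.card ↥(SPath m m) +
        ∑ i : Fin (m + 1), Nat.card ↥(SPath i i) * Nat.card ↥(SPath (m - i) (m - i)) := by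
  have hbij : Function.Bijective
      (fun x : Idx m => (⟨glue m x, glue_mem m x⟩ : ↥(SPath (m + 1) (m + 1)))) := by
    constructor
    · intro x y hxy
      exact glue_inj m (congrArg Subtype.val hxy)
    · rintro ⟨l, hl⟩
      obtain ⟨x, hx⟩ := glue_surj m l hl
      exact ⟨x, Subtype.ext hx⟩
  rw [← Nat.card_eq_of_bijective _ hbij]
  unfold Idx
  rw [Nat.card_sum, card_sigma_eq]
  simp [Nat.card_prod]

end SchroederAux

/-- the large Schröder numbers (defined as counts of weakly subdiagonal
paths with steps (1,0),(0,1),(1,1)) satisfy S(n) = S(n-1) + Σ_{i+j=n-1} S(i)·S(j). -/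
theorem schroeder_recurrence
    (S : ℕ → ℕ) (hS : ∀ n : ℕ, S n = Nat.card ↥(SPath n n)) :
    ∀ n : ℕ, 1 ≤ n →
      S n = S (n - 1) + ∑ i ∈ Finset.range n, S i * S (n - 1 - i) := by
  intro n hn
  obtain ⟨m, rfl⟩ : ∃ m, n = m + 1 := ⟨n - 1, by omega⟩
  simp only [hS, Nat.add_sub_cancel]
  rw [SchroederAux.card_succ m, Fin.sum_univ_eq_sum_range
    (fun i => Nat.card ↥(SPath i i) * Nat.card ↥(SPath (m - i) (m - i)))]
end

section
/- The total number of paths from (0,0) to all points (i, n−2i) for i = 0,…,⌊n/2⌋ in the lattice L_CS equals the coefficient of x^n in F(x³)·(1/(1 − x·S(x³)) + 1/(1 − x²·C(x³)) − 1). -/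
open Finset PowerSeries

section Paths

lemma endPt_nil : endPt [] = (0, 0) := by simp [endPt]

lemma endPt_cons (s : ℤ × ℤ) (l : List (ℤ × ℤ)) :
    endPt (s :: l) = (s.1 + (endPt l).1, s.2 + (endPt l).2) := by
  simp [endPt]

lemma endPt_append (l m : List (ℤ × ℤ)) :
    endPt (l ++ m) = ((endPt l).1 + (endPt m).1, (endPt l).2 + (endPt m).2) := by
  simp [endPt]

lemma endPt_singleton (s : ℤ × ℤ) : endPt [s] = s := by simp [endPt]

lemma okFrom_steps {D : ℤ × ℤ → Prop} :
    ∀ (p : ℤ × ℤ) (l : List (ℤ × ℤ)), okFrom D p l →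
      ∀ s ∈ l, s = (1, 0) ∨ s = (0, 1) ∨ s = (1, 1)
  | _, [], _ => by simp
  | p, a :: l, h => by
    intro s hs
    rcases List.mem_cons.1 hs with rfl | hs
    · rcases h.1 with h' | h' | h' <;> tauto
    · exact okFrom_steps _ l h.2 s hs

lemma okFrom_cons {D : ℤ × ℤ → Prop} (p s : ℤ × ℤ) (l : List (ℤ × ℤ)) :
    okFrom D p (s :: l) ↔ (s = (1, 0) ∨ s = (0, 1) ∨ (s = (1, 1) ∧ D p)) ∧
      okFrom D (p.1 + s.1, p.2 + s.2) l := Iff.rfl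

lemma okFrom_append_singleton {D : ℤ × ℤ → Prop} :
    ∀ (p : ℤ × ℤ) (m : List (ℤ × ℤ)) (s : ℤ × ℤ),
      okFrom D p (m ++ [s]) ↔ okFrom D p m ∧
        (s = (1, 0) ∨ s = (0, 1) ∨ (s = (1, 1) ∧
          D (p.1 + (endPt m).1, p.2 + (endPt m).2)))
  | p, [], s => by
    simp [okFrom, endPt_nil]
  | p, a :: m, s => by
    have IH := okFrom_append_singleton (D := D) (p.1 + a.1, p.2 + a.2) m s
    simp only [List.cons_append, okFrom_cons, IH, endPt_cons]
    constructor
    · rintro ⟨h1, h2, h3⟩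
      refine ⟨⟨h1, h2⟩, ?_⟩
      rcases h3 with h | h | ⟨h, hD⟩
      · exact Or.inl h
      · exact Or.inr (Or.inl h)
      · refine Or.inr (Or.inr ⟨h, ?_⟩); convert hD using 2 <;> ring
    · rintro ⟨⟨h1, h2⟩, h3⟩
      refine ⟨h1, h2, ?_⟩
      rcases h3 with h | h | ⟨h, hD⟩
      · exact Or.inl h
      · exact Or.inr (Or.inl h)
      · refine Or.inr (Or.inr ⟨h, ?_⟩); convert hD using 2 <;> ring

/-- For a list of allowed steps, endpoint coordinates are nonnegative and their
sum bounds the length. -/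
lemma steps_bounds :
    ∀ l : List (ℤ × ℤ), (∀ s ∈ l, s = (1, 0) ∨ s = (0, 1) ∨ s = (1, 1)) →
      0 ≤ (endPt l).1 ∧ 0 ≤ (endPt l).2 ∧ (l.length : ℤ) ≤ (endPt l).1 + (endPt l).2
  | [], _ => by simp [endPt_nil]
  | a :: l, h => by
    have IH := steps_bounds l (fun s hs => h s (List.mem_cons_of_mem a hs))
    have ha := h a (List.mem_cons_self)
    rw [endPt_cons]
    rcases ha with rfl | rfl | rfl <;>
      · simp only [List.length_cons] at *
        push_cast
        refine ⟨by omega, by omega, by omega⟩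

end Paths
section Finiteness

lemma LCS_finite (a b : ℕ) : (LCS a b).Finite := by
  classical
  have hsub : LCS a b ⊆ {l : List (ℤ × ℤ) | l.length ≤ a + b ∧
      ∀ s ∈ l, s = (1, 0) ∨ s = (0, 1) ∨ s = (1, 1)} := by
    rintro l ⟨hok, hend⟩
    have hst := okFrom_steps _ _ hok
    have hb := steps_bounds l hst
    rw [hend] at hb
    refine ⟨?_, hst⟩
    have : (l.length : ℤ) ≤ (a : ℤ) + b := hb.2.2
    exact_mod_cast this
  refine Set.Finite.subset ?_ hsub
  set d : Fin 3 → ℤ × ℤ := ![(1, 0), (0, 1), (1, 1)] with hd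
  set e : ℤ × ℤ → Fin 3 :=
    fun s => if s = (1, 0) then 0 else if s = (0, 1) then 1 else 2 with he
  have hfin : {m : List (Fin 3) | m.length ≤ a + b}.Finite :=
    List.finite_length_le _ _
  refine (hfin.image (List.map d)).subset ?_
  rintro l ⟨hl, hsteps⟩
  refine ⟨l.map e, by simpa using hl, ?_⟩
  rw [List.map_map]
  conv_rhs => rw [← List.map_id l]
  refine List.map_congr_left ?_
  intro s hs
  rcases hsteps s hs with rfl | rfl | rfl <;> simp [hd, he, Prod.ext_iff]

lemma LCS_zero : LCS 0 0 = {([] : List (ℤ × ℤ))} := by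
  ext l
  constructor
  · rintro ⟨hok, hend⟩
    have hb := steps_bounds l (okFrom_steps _ _ hok)
    rw [hend] at hb
    have : (l.length : ℤ) ≤ 0 := by simpa using hb.2.2
    have : l.length = 0 := by exact_mod_cast le_antisymm this (by positivity)
    simpa [List.length_eq_zero_iff] using this
  · rintro rfl
    exact ⟨trivial, by simp [endPt_nil]⟩

lemma card_LCS_zero : Nat.card (LCS 0 0) = 1 := by
  rw [Nat.card_coe_set_eq, LCS_zero, Set.ncard_singleton]

end Finiteness

section Rec

/-- Paths ending with step s, for s = (1,0). -/
lemma T1_eq (a b : ℕ) (ha : 1 ≤ a) :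
    {l | l ∈ LCS a b ∧ l.getLast? = some (1, 0)} =
      (fun m => m ++ [((1 : ℤ), (0 : ℤ))]) '' LCS (a - 1) b := by
  ext l
  constructor
  · rintro ⟨⟨hok, hend⟩, hlast⟩
    obtain ⟨m, rfl⟩ := List.getLast?_eq_some_iff.1 hlast
    rw [okFrom_append_singleton] at hok
    rw [endPt_append, endPt_singleton] at hend
    refine ⟨m, ⟨hok.1, ?_⟩, rfl⟩
    have h1 : (endPt m).1 = (a : ℤ) - 1 := by
      have := congrArg Prod.fst hend; simp at this; omega
    have h2 : (endPt m).2 = (b : ℤ) := by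
      have := congrArg Prod.snd hend; simp at this; omega
    have hc : ((a - 1 : ℕ) : ℤ) = (a : ℤ) - 1 := by omega
    rw [Prod.ext_iff, h1, h2, hc]; exact ⟨rfl, rfl⟩
  · rintro ⟨m, ⟨hok, hend⟩, rfl⟩
    refine ⟨⟨?_, ?_⟩, List.getLast?_concat⟩
    · rw [okFrom_append_singleton]; exact ⟨hok, Or.inl rfl⟩
    · rw [endPt_append, endPt_singleton, hend, Prod.ext_iff]
      constructor <;> simp <;> omega

lemma T1_empty (b : ℕ) :
    {l | l ∈ LCS 0 b ∧ l.getLast? = some (1, 0)} = ∅ := by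
  ext l
  simp only [Set.mem_setOf_eq, Set.mem_empty_iff_false, iff_false, not_and]
  rintro ⟨hok, hend⟩ hlast
  obtain ⟨m, rfl⟩ := List.getLast?_eq_some_iff.1 hlast
  rw [okFrom_append_singleton] at hok
  rw [endPt_append, endPt_singleton] at hend
  have hb := steps_bounds m (okFrom_steps _ _ hok.1)
  have := congrArg Prod.fst hend
  simp at this
  omega

lemma T2_eq (a b : ℕ) (hb : 1 ≤ b) :
    {l | l ∈ LCS a b ∧ l.getLast? = some (0, 1)} =
      (fun m => m ++ [((0 : ℤ), (1 : ℤ))]) '' LCS a (b - 1) := by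
  ext l
  constructor
  · rintro ⟨⟨hok, hend⟩, hlast⟩
    obtain ⟨m, rfl⟩ := List.getLast?_eq_some_iff.1 hlast
    rw [okFrom_append_singleton] at hok
    rw [endPt_append, endPt_singleton] at hend
    refine ⟨m, ⟨hok.1, ?_⟩, rfl⟩
    have h1 : (endPt m).1 = (a : ℤ) := by
      have := congrArg Prod.fst hend; simp at this; omega
    have h2 : (endPt m).2 = (b : ℤ) - 1 := by
      have := congrArg Prod.snd hend; simp at this; omega
    have hc : ((b - 1 : ℕ) : ℤ) = (b : ℤ) - 1 := by omega
    rw [Prod.ext_iff, h1, h2, hc]; exact ⟨rfl, rfl⟩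
  · rintro ⟨m, ⟨hok, hend⟩, rfl⟩
    refine ⟨⟨?_, ?_⟩, List.getLast?_concat⟩
    · rw [okFrom_append_singleton]; exact ⟨hok, Or.inr (Or.inl rfl)⟩
    · rw [endPt_append, endPt_singleton, hend, Prod.ext_iff]
      constructor <;> simp <;> omega

lemma T2_empty (a : ℕ) :
    {l | l ∈ LCS a 0 ∧ l.getLast? = some (0, 1)} = ∅ := by
  ext l
  simp only [Set.mem_setOf_eq, Set.mem_empty_iff_false, iff_false, not_and]
  rintro ⟨hok, hend⟩ hlast
  obtain ⟨m, rfl⟩ := List.getLast?_eq_some_iff.1 hlast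
  rw [okFrom_append_singleton] at hok
  rw [endPt_append, endPt_singleton] at hend
  have hb := steps_bounds m (okFrom_steps _ _ hok.1)
  have := congrArg Prod.snd hend
  simp at this
  omega

lemma T3_eq (a b : ℕ) (ha : 1 ≤ a) (hb : 1 ≤ b) (hab : a ≤ b) :
    {l | l ∈ LCS a b ∧ l.getLast? = some (1, 1)} =
      (fun m => m ++ [((1 : ℤ), (1 : ℤ))]) '' LCS (a - 1) (b - 1) := by
  ext l
  constructor
  · rintro ⟨⟨hok, hend⟩, hlast⟩
    obtain ⟨m, rfl⟩ := List.getLast?_eq_some_iff.1 hlast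
    rw [okFrom_append_singleton] at hok
    rw [endPt_append, endPt_singleton] at hend
    refine ⟨m, ⟨hok.1, ?_⟩, rfl⟩
    have h1 : (endPt m).1 = (a : ℤ) - 1 := by
      have := congrArg Prod.fst hend; simp at this; omega
    have h2 : (endPt m).2 = (b : ℤ) - 1 := by
      have := congrArg Prod.snd hend; simp at this; omega
    have hc : ((a - 1 : ℕ) : ℤ) = (a : ℤ) - 1 := by omega
    have hc' : ((b - 1 : ℕ) : ℤ) = (b : ℤ) - 1 := by omega
    rw [Prod.ext_iff, h1, h2, hc, hc']; exact ⟨rfl, rfl⟩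
  · rintro ⟨m, ⟨hok, hend⟩, rfl⟩
    refine ⟨⟨?_, ?_⟩, List.getLast?_concat⟩
    · rw [okFrom_append_singleton]
      refine ⟨hok, Or.inr (Or.inr ⟨rfl, ?_⟩)⟩
      rw [hend]
      simp
      omega
    · rw [endPt_append, endPt_singleton, hend, Prod.ext_iff]
      constructor <;> simp <;> omega

lemma T3_empty (a b : ℕ) (h : ¬(1 ≤ a ∧ 1 ≤ b ∧ a ≤ b)) :
    {l | l ∈ LCS a b ∧ l.getLast? = some (1, 1)} = ∅ := by
  ext l
  simp only [Set.mem_setOf_eq, Set.mem_empty_iff_false, iff_false, not_and]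
  rintro ⟨hok, hend⟩ hlast
  obtain ⟨m, rfl⟩ := List.getLast?_eq_some_iff.1 hlast
  rw [okFrom_append_singleton] at hok
  rw [endPt_append, endPt_singleton] at hend
  have hnn := steps_bounds m (okFrom_steps _ _ hok.1)
  have h1 := congrArg Prod.fst hend
  have h2 := congrArg Prod.snd hend
  simp at h1 h2
  rcases hok.2 with h' | h' | h'
  · exact absurd h' (by simp [Prod.ext_iff])
  · exact absurd h' (by simp [Prod.ext_iff])
  · have hD := h'.2
    simp at hD
    omega

end Rec
section CardRec

lemma card_eq_ncard (a b : ℕ) : (Nat.card (LCS a b) : ℤ) = ((LCS a b).ncard : ℤ) := by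
  rw [Nat.card_coe_set_eq]

lemma LCS_split (a b : ℕ) (h : ¬(a = 0 ∧ b = 0)) :
    LCS a b = {l | l ∈ LCS a b ∧ l.getLast? = some (1, 0)} ∪
      ({l | l ∈ LCS a b ∧ l.getLast? = some (0, 1)} ∪
       {l | l ∈ LCS a b ∧ l.getLast? = some (1, 1)}) := by
  ext l
  constructor
  · intro hl
    have hne : l ≠ [] := by
      rintro rfl
      rcases hl with ⟨-, hend⟩
      rw [endPt_nil, Prod.ext_iff] at hend
      simp at hend
      omega
    obtain ⟨s, hs⟩ := Option.isSome_iff_exists.1 (List.getLast?_isSome.2 hne)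
    obtain ⟨m, rfl⟩ := List.getLast?_eq_some_iff.1 hs
    have hmem : s ∈ m ++ [s] := by simp
    rcases okFrom_steps _ _ hl.1 s hmem with rfl | rfl | rfl
    · exact Or.inl ⟨hl, hs⟩
    · exact Or.inr (Or.inl ⟨hl, hs⟩)
    · exact Or.inr (Or.inr ⟨hl, hs⟩)
  · rintro (⟨hl, -⟩ | ⟨hl, -⟩ | ⟨hl, -⟩) <;> exact hl

lemma card_rec (a b : ℕ) (h : ¬(a = 0 ∧ b = 0)) :
    (Nat.card (LCS a b) : ℤ) =
      (if 1 ≤ a then (Nat.card (LCS (a - 1) b) : ℤ) else 0) +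
      (if 1 ≤ b then (Nat.card (LCS a (b - 1)) : ℤ) else 0) +
      (if 1 ≤ a ∧ 1 ≤ b ∧ a ≤ b then (Nat.card (LCS (a - 1) (b - 1)) : ℤ) else 0) := by
  classical
  have hfin := LCS_finite a b
  set T1 : Set (List (ℤ × ℤ)) := {l | l ∈ LCS a b ∧ l.getLast? = some (1, 0)} with hT1
  set T2 : Set (List (ℤ × ℤ)) := {l | l ∈ LCS a b ∧ l.getLast? = some (0, 1)} with hT2
  set T3 : Set (List (ℤ × ℤ)) := {l | l ∈ LCS a b ∧ l.getLast? = some (1, 1)} with hT3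
  have hsub1 : T1 ⊆ LCS a b := fun l hl => hl.1
  have hsub2 : T2 ⊆ LCS a b := fun l hl => hl.1
  have hsub3 : T3 ⊆ LCS a b := fun l hl => hl.1
  have hd12 : Disjoint T1 T2 := by
    rw [Set.disjoint_left]
    rintro l ⟨-, h1⟩ ⟨-, h2⟩
    rw [h1] at h2
    simp [Prod.ext_iff] at h2
  have hd13 : Disjoint T1 T3 := by
    rw [Set.disjoint_left]
    rintro l ⟨-, h1⟩ ⟨-, h2⟩
    rw [h1] at h2
    simp [Prod.ext_iff] at h2
  have hd23 : Disjoint T2 T3 := by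
    rw [Set.disjoint_left]
    rintro l ⟨-, h1⟩ ⟨-, h2⟩
    rw [h1] at h2
    simp [Prod.ext_iff] at h2
  have hcard : (LCS a b).ncard = T1.ncard + (T2.ncard + T3.ncard) := by
    rw [← Set.ncard_union_eq hd23 (hfin.subset hsub2) (hfin.subset hsub3),
      ← Set.ncard_union_eq (Set.disjoint_union_right.2 ⟨hd12, hd13⟩)
        (hfin.subset hsub1) ((hfin.subset hsub2).union (hfin.subset hsub3)),
      ← LCS_split a b h]
  have e1 : (T1.ncard : ℤ) = if 1 ≤ a then (Nat.card (LCS (a - 1) b) : ℤ) else 0 := by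
    by_cases ha : 1 ≤ a
    · rw [if_pos ha, hT1, T1_eq a b ha,
        Set.ncard_image_of_injective _ (List.append_left_injective _),
        Nat.card_coe_set_eq]
    · have ha0 : a = 0 := by omega
      subst ha0
      rw [if_neg ha, hT1, T1_empty b]
      simp
  have e2 : (T2.ncard : ℤ) = if 1 ≤ b then (Nat.card (LCS a (b - 1)) : ℤ) else 0 := by
    by_cases hb : 1 ≤ b
    · rw [if_pos hb, hT2, T2_eq a b hb,
        Set.ncard_image_of_injective _ (List.append_left_injective _),
        Nat.card_coe_set_eq]
    · have hb0 : b = 0 := by omega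
      subst hb0
      rw [if_neg hb, hT2, T2_empty a]
      simp
  have e3 : (T3.ncard : ℤ) =
      if 1 ≤ a ∧ 1 ≤ b ∧ a ≤ b then (Nat.card (LCS (a - 1) (b - 1)) : ℤ) else 0 := by
    by_cases hab : 1 ≤ a ∧ 1 ≤ b ∧ a ≤ b
    · rw [if_pos hab, hT3, T3_eq a b hab.1 hab.2.1 hab.2.2,
        Set.ncard_image_of_injective _ (List.append_left_injective _),
        Nat.card_coe_set_eq]
    · rw [if_neg hab, hT3, T3_empty a b hab]
      simp
  rw [card_eq_ncard, hcard, ← e1, ← e2, ← e3]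
  push_cast
  ring

/-- Path counts extended to all of ℤ × ℤ (zero off the first quadrant). -/
noncomputable def gZ (i j : ℤ) : ℤ :=
  if 0 ≤ i ∧ 0 ≤ j then (Nat.card (LCS i.toNat j.toNat) : ℤ) else 0

lemma gZ_eq (a b : ℕ) : gZ a b = (Nat.card (LCS a b) : ℤ) := by
  simp [gZ]

lemma gZ_rec (i j : ℤ) (h : ¬(i = 0 ∧ j = 0)) :
    gZ i j = gZ (i - 1) j + gZ i (j - 1) +
      (if i ≤ j then gZ (i - 1) (j - 1) else 0) := by
  by_cases hij : 0 ≤ i ∧ 0 ≤ j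
  · obtain ⟨a, rfl⟩ : ∃ a : ℕ, i = (a : ℤ) := ⟨i.toNat, (Int.toNat_of_nonneg hij.1).symm⟩
    obtain ⟨b, rfl⟩ : ∃ b : ℕ, j = (b : ℤ) := ⟨j.toNat, (Int.toNat_of_nonneg hij.2).symm⟩
    have hab : ¬(a = 0 ∧ b = 0) := by
      intro hab'; exact h (by simp [hab'.1, hab'.2])
    rw [gZ_eq, card_rec a b hab]
    congr 1
    · congr 1
      · by_cases ha : 1 ≤ a
        · rw [if_pos ha]
          have : (a : ℤ) - 1 = ((a - 1 : ℕ) : ℤ) := by omega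
          rw [this, gZ_eq]
        · have : a = 0 := by omega
          subst this
          rw [if_neg ha]
          simp [gZ]
      · by_cases hb : 1 ≤ b
        · rw [if_pos hb]
          have : (b : ℤ) - 1 = ((b - 1 : ℕ) : ℤ) := by omega
          rw [this, gZ_eq]
        · have : b = 0 := by omega
          subst this
          rw [if_neg hb]
          simp [gZ]
    · by_cases hab2 : 1 ≤ a ∧ 1 ≤ b ∧ a ≤ b
      · rw [if_pos hab2, if_pos (by exact_mod_cast hab2.2.2)]
        have h1 : (a : ℤ) - 1 = ((a - 1 : ℕ) : ℤ) := by omega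
        have h2 : (b : ℤ) - 1 = ((b - 1 : ℕ) : ℤ) := by omega
        rw [h1, h2, gZ_eq]
      · rw [if_neg hab2]
        by_cases hle : (a : ℤ) ≤ (b : ℤ)
        · rw [if_pos hle]
          have : a = 0 ∨ b = 0 := by omega
          rcases this with rfl | rfl
          · simp only [gZ]
            rw [if_neg (by omega)]
          · simp only [gZ]
            rw [if_neg (by omega)]
        · rw [if_neg hle]
  · have h1 : gZ i j = 0 := by simp only [gZ, if_neg hij]
    have h2 : gZ (i - 1) j = 0 := by
      simp only [gZ]; rw [if_neg]; omega
    have h3 : gZ i (j - 1) = 0 := by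
      simp only [gZ]; rw [if_neg]; omega
    have h4 : gZ (i - 1) (j - 1) = 0 := by
      simp only [gZ]; rw [if_neg]; omega
    rw [h1, h2, h3, h4]
    simp

end CardRec
section SubCubeAlg

lemma coeff_subCube (g : PowerSeries ℤ) (n : ℕ) :
    PowerSeries.coeff (R := ℤ) n (subCube g) =
      if 3 ∣ n then PowerSeries.coeff (R := ℤ) (n / 3) g else 0 := by
  simp [subCube]

lemma subCube_one : subCube 1 = 1 := by
  ext n
  rw [coeff_subCube]
  by_cases h3 : 3 ∣ n
  · rw [if_pos h3, PowerSeries.coeff_one, PowerSeries.coeff_one]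
    by_cases h0 : n = 0
    · subst h0; norm_num
    · rw [if_neg (by omega), if_neg h0]
  · rw [if_neg h3, PowerSeries.coeff_one, if_neg (by rintro rfl; exact h3 ⟨0, rfl⟩)]

lemma subCube_add (f g : PowerSeries ℤ) : subCube (f + g) = subCube f + subCube g := by
  ext n
  rw [map_add, coeff_subCube, coeff_subCube, coeff_subCube, map_add]
  by_cases h3 : 3 ∣ n <;> simp [h3]

lemma subCube_X : subCube PowerSeries.X = PowerSeries.X ^ 3 := by
  ext n
  rw [coeff_subCube, PowerSeries.coeff_X_pow]
  by_cases h3 : 3 ∣ n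
  · rw [if_pos h3, PowerSeries.coeff_X]
    by_cases hn : n = 3
    · rw [if_pos (by omega), if_pos hn]
    · rw [if_neg (by omega), if_neg hn]
  · rw [if_neg h3, if_neg (by rintro rfl; exact h3 ⟨1, rfl⟩)]

lemma subCube_mul (f g : PowerSeries ℤ) : subCube (f * g) = subCube f * subCube g := by
  classical
  ext n
  rw [PowerSeries.coeff_mul, coeff_subCube]
  have hterm : ∀ p ∈ antidiagonal n,
      PowerSeries.coeff (R := ℤ) p.1 (subCube f) * PowerSeries.coeff (R := ℤ) p.2 (subCube g) =
        if 3 ∣ p.1 ∧ 3 ∣ p.2 then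
          PowerSeries.coeff (R := ℤ) (p.1 / 3) f * PowerSeries.coeff (R := ℤ) (p.2 / 3) g else 0 := by
    intro p _
    rw [coeff_subCube, coeff_subCube]
    by_cases h1 : 3 ∣ p.1 <;> by_cases h2 : 3 ∣ p.2 <;> simp [h1, h2]
  rw [Finset.sum_congr rfl hterm, Finset.sum_ite, Finset.sum_const_zero, add_zero]
  by_cases h3 : 3 ∣ n
  · rw [if_pos h3, PowerSeries.coeff_mul]
    refine Finset.sum_nbij' (fun q => (3 * q.1, 3 * q.2)) (fun p => (p.1 / 3, p.2 / 3))
      ?_ ?_ ?_ ?_ ?_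
    · rintro ⟨x, y⟩ hq
      simp only [Finset.mem_filter, Finset.HasAntidiagonal.mem_antidiagonal] at hq ⊢
      omega
    · rintro ⟨x, y⟩ hp
      simp only [Finset.mem_filter, Finset.HasAntidiagonal.mem_antidiagonal] at hp ⊢
      omega
    · rintro ⟨x, y⟩ _
      simp only [Prod.mk.injEq]
      omega
    · rintro ⟨x, y⟩ hp
      simp only [Finset.mem_filter, Finset.HasAntidiagonal.mem_antidiagonal] at hp
      simp only [Prod.mk.injEq]
      omega
    · rintro ⟨x, y⟩ _
      simp only []
      rw [Nat.mul_div_cancel_left x (by norm_num : 0 < 3),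
        Nat.mul_div_cancel_left y (by norm_num : 0 < 3)]
  · rw [if_neg h3]
    symm
    refine Finset.sum_eq_zero ?_
    rintro ⟨x, y⟩ hp
    simp only [Finset.mem_filter, Finset.HasAntidiagonal.mem_antidiagonal] at hp
    exact absurd (by omega : (3:ℕ) ∣ n) h3

end SubCubeAlg

section GFEq

lemma schroederGF_eq :
    schroederGF = 1 + PowerSeries.X * schroederGF +
      PowerSeries.X * (schroederGF * schroederGF) := by
  ext n
  rcases n with _ | n
  · simp [schroederGF, schroeder]
  · rw [map_add, map_add, PowerSeries.coeff_one, if_neg (Nat.succ_ne_zero n),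
      PowerSeries.coeff_succ_X_mul, PowerSeries.coeff_succ_X_mul, PowerSeries.coeff_mul,
      Nat.sum_antidiagonal_eq_sum_range_succ_mk]
    have hs : schroeder (n + 1) =
        schroeder n + ∑ i : Fin (n + 1), schroeder i * schroeder (n - i) := by
      rw [schroeder]
    simp only [schroederGF, PowerSeries.coeff_mk, zero_add, hs]
    push_cast
    rw [Fin.sum_univ_eq_sum_range (fun i => (schroeder i : ℤ) * (schroeder (n - i) : ℤ)) (n + 1)]

lemma catalanGF_eq :
    catalanGF = 1 + PowerSeries.X * (catalanGF * catalanGF) := by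
  ext n
  rcases n with _ | n
  · simp [catalanGF]
  · rw [map_add, PowerSeries.coeff_one, if_neg (Nat.succ_ne_zero n),
      PowerSeries.coeff_succ_X_mul, PowerSeries.coeff_mul,
      Nat.sum_antidiagonal_eq_sum_range_succ_mk]
    have hs := catalan_succ' n
    rw [Nat.sum_antidiagonal_eq_sum_range_succ_mk] at hs
    simp only [catalanGF, PowerSeries.coeff_mk, zero_add, hs]
    push_cast
    ring

lemma S3_eq :
    subCube schroederGF = 1 + PowerSeries.X ^ 3 * subCube schroederGF +
      PowerSeries.X ^ 3 * (subCube schroederGF * subCube schroederGF) := by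
  conv_lhs => rw [schroederGF_eq]
  rw [subCube_add, subCube_add, subCube_one, subCube_mul, subCube_mul, subCube_mul, subCube_X]

lemma C3_eq :
    subCube catalanGF = 1 + PowerSeries.X ^ 3 * (subCube catalanGF * subCube catalanGF) := by
  conv_lhs => rw [catalanGF_eq]
  rw [subCube_add, subCube_one, subCube_mul, subCube_mul, subCube_X]

end GFEq
section PhiLam

/-- The generating function of the line y = x + c in L_CS. -/
noncomputable def Phi (c : ℤ) : PowerSeries ℤ :=
  if 0 ≤ c then subCube FGF * (PowerSeries.X * subCube schroederGF) ^ c.toNat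
  else subCube FGF * (PowerSeries.X ^ 2 * subCube catalanGF) ^ (-c).toNat

lemma Phi_nonneg (c : ℤ) (hc : 0 ≤ c) :
    Phi c = subCube FGF * (PowerSeries.X * subCube schroederGF) ^ c.toNat := by
  simp only [Phi]; rw [if_pos hc]

lemma Phi_neg (c : ℤ) (hc : c < 0) :
    Phi c = subCube FGF * (PowerSeries.X ^ 2 * subCube catalanGF) ^ (-c).toNat := by
  simp only [Phi]; rw [if_neg (by omega)]

lemma XS_eq : PowerSeries.X * subCube schroederGF =
    PowerSeries.X + PowerSeries.X ^ 2 * (PowerSeries.X * subCube schroederGF) ^ 2 +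
      PowerSeries.X ^ 3 * (PowerSeries.X * subCube schroederGF) := by
  linear_combination (PowerSeries.X : PowerSeries ℤ) * S3_eq

lemma XC_eq : PowerSeries.X ^ 2 * subCube catalanGF =
    PowerSeries.X ^ 2 +
      PowerSeries.X * (PowerSeries.X ^ 2 * subCube catalanGF) ^ 2 := by
  linear_combination (PowerSeries.X ^ 2 : PowerSeries ℤ) * C3_eq

noncomputable def lam (c : ℤ) (n : ℤ) : ℤ :=
  if 0 ≤ n then PowerSeries.coeff (R := ℤ) n.toNat (Phi c) else 0

lemma coeff_if (Q : PowerSeries ℤ) (e : ℕ) (n : ℤ) (he : 1 ≤ e) :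
    PowerSeries.coeff (R := ℤ) n.toNat (PowerSeries.X ^ e * Q) =
      if 0 ≤ n - e then PowerSeries.coeff (R := ℤ) (n - e).toNat Q else 0 := by
  rw [PowerSeries.coeff_X_pow_mul']
  by_cases h : (e : ℤ) ≤ n
  · rw [if_pos (by omega), if_pos (by omega)]
    have h1 : n.toNat - e = (n - e).toNat := by omega
    rw [h1]
  · rw [if_neg (by omega), if_neg (by omega)]

lemma coeff_if1 (Q : PowerSeries ℤ) (n : ℤ) :
    PowerSeries.coeff (R := ℤ) n.toNat (PowerSeries.X * Q) =
      if 0 ≤ n - 1 then PowerSeries.coeff (R := ℤ) (n - 1).toNat Q else 0 := by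
  rw [show (PowerSeries.X : PowerSeries ℤ) * Q = PowerSeries.X ^ 1 * Q by rw [pow_one]]
  rw [coeff_if Q 1 n le_rfl]
  norm_num

lemma lam_rec_pos (c n : ℤ) (hc : 1 ≤ c) (hn : 0 ≤ n) :
    lam c n = lam (c - 1) (n - 1) + lam (c + 1) (n - 2) + lam c (n - 3) := by
  obtain ⟨k, hk⟩ : ∃ k : ℕ, c.toNat = k + 1 := ⟨c.toNat - 1, by omega⟩
  set A := subCube FGF
  set XS := PowerSeries.X * subCube schroederGF with hXS
  have e0 : Phi c = PowerSeries.X * Phi (c - 1) + PowerSeries.X ^ 2 * Phi (c + 1) +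
      PowerSeries.X ^ 3 * Phi c := by
    rw [Phi_nonneg c (by omega), Phi_nonneg (c - 1) (by omega),
      Phi_nonneg (c + 1) (by omega), hk,
      show (c - 1).toNat = k by omega, show (c + 1).toNat = k + 2 by omega]
    linear_combination (A * XS ^ k) * XS_eq
  simp only [lam]
  rw [if_pos hn]
  nth_rewrite 1 [e0]
  rw [map_add, map_add, coeff_if1, coeff_if _ 2 _ (by norm_num), coeff_if _ 3 _ (by norm_num)]
  push_cast
  ring

lemma lam_rec_neg (c n : ℤ) (hc : c ≤ -1) (hn : 0 ≤ n) :
    lam c n = lam (c - 1) (n - 1) + lam (c + 1) (n - 2) := by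
  obtain ⟨k, hk⟩ : ∃ k : ℕ, (-c).toNat = k + 1 := ⟨(-c).toNat - 1, by omega⟩
  set A := subCube FGF
  set XC := PowerSeries.X ^ 2 * subCube catalanGF with hXC
  have hP : Phi (c + 1) = A * XC ^ (-(c + 1)).toNat := by
    by_cases h : c + 1 = 0
    · rw [h, Phi_nonneg 0 le_rfl]
      norm_num
      rfl
    · exact Phi_neg (c + 1) (by omega)
  have e0 : Phi c = PowerSeries.X * Phi (c - 1) + PowerSeries.X ^ 2 * Phi (c + 1) := by
    rw [Phi_neg c (by omega), Phi_neg (c - 1) (by omega), hP,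
      hk, show (-(c - 1)).toNat = k + 2 by omega, show (-(c + 1)).toNat = k by omega]
    linear_combination (A * XC ^ k) * XC_eq
  simp only [lam]
  rw [if_pos hn]
  nth_rewrite 1 [e0]
  rw [map_add, coeff_if1, coeff_if _ 2 _ (by norm_num)]
  push_cast
  ring

lemma lam_zero_of_ne (c : ℤ) (hc : c ≠ 0) : lam c 0 = 0 := by
  simp only [lam]
  rw [if_pos le_rfl, show (0:ℤ).toNat = 0 from rfl, PowerSeries.coeff_zero_eq_constantCoeff]
  by_cases h : 0 ≤ c
  · rw [Phi_nonneg c h, map_mul, map_pow, map_mul]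
    simp only [PowerSeries.constantCoeff_X, zero_mul]
    rw [zero_pow (by omega : c.toNat ≠ 0), mul_zero]
  · rw [Phi_neg c (by omega), map_mul, map_pow, map_mul, map_pow]
    simp only [PowerSeries.constantCoeff_X]
    rw [zero_pow (by norm_num : (2:ℕ) ≠ 0), zero_mul,
      zero_pow (by omega : (-c).toNat ≠ 0), mul_zero]

end PhiLam

section MainInduction

noncomputable def Lfun (c n : ℤ) : ℤ :=
  if 3 ∣ (n - c) then gZ ((n - c) / 3) ((n + 2 * c) / 3) else 0

lemma Lfun_rec (c n : ℤ) (hn : 1 ≤ n) :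
    Lfun c n = Lfun (c - 1) (n - 1) + Lfun (c + 1) (n - 2) +
      (if 0 ≤ c then Lfun c (n - 3) else 0) := by
  by_cases h3 : (3:ℤ) ∣ (n - c)
  · obtain ⟨i, hi⟩ := h3
    obtain ⟨j, hj⟩ : ∃ j, n + 2 * c = 3 * j := ⟨i + c, by omega⟩
    have e1 : Lfun c n = gZ i j := by
      simp only [Lfun]
      rw [if_pos ⟨i, hi⟩]
      congr 1 <;> omega
    have e2 : Lfun (c - 1) (n - 1) = gZ i (j - 1) := by
      simp only [Lfun]
      rw [if_pos ⟨i, by omega⟩]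
      congr 1 <;> omega
    have e3 : Lfun (c + 1) (n - 2) = gZ (i - 1) j := by
      simp only [Lfun]
      rw [if_pos ⟨i - 1, by omega⟩]
      congr 1 <;> omega
    have e4 : Lfun c (n - 3) = gZ (i - 1) (j - 1) := by
      simp only [Lfun]
      rw [if_pos ⟨i - 1, by omega⟩]
      congr 1 <;> omega
    rw [e1, e2, e3, e4, gZ_rec i j (by omega)]
    by_cases hc : 0 ≤ c
    · rw [if_pos hc, if_pos (by omega : i ≤ j)]
      ring
    · rw [if_neg hc, if_neg (by omega : ¬ i ≤ j)]
      ring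
  · have e1 : Lfun c n = 0 := by simp only [Lfun]; rw [if_neg h3]
    have e2 : Lfun (c - 1) (n - 1) = 0 := by
      simp only [Lfun]; rw [if_neg (by omega)]
    have e3 : Lfun (c + 1) (n - 2) = 0 := by
      simp only [Lfun]; rw [if_neg (by omega)]
    have e4 : Lfun c (n - 3) = 0 := by
      simp only [Lfun]; rw [if_neg (by omega)]
    rw [e1, e2, e3, e4]
    simp

lemma Lfun_zero_eq (n : ℤ) : Lfun 0 n = lam 0 n := by
  have hPhi0 : Phi 0 = subCube FGF := by
    rw [Phi_nonneg 0 le_rfl]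
    norm_num
  simp only [Lfun, lam, hPhi0, sub_zero, mul_zero, add_zero]
  by_cases hn : 0 ≤ n
  · rw [if_pos hn, coeff_subCube]
    by_cases h3 : (3:ℤ) ∣ n
    · rw [if_pos h3, if_pos (by omega : 3 ∣ n.toNat)]
      simp only [gZ]
      rw [if_pos ⟨by omega, by omega⟩]
      simp only [FGF, PowerSeries.coeff_mk, fCS]
      have h1 : (n / 3).toNat = n.toNat / 3 := by omega
      rw [h1]
    · rw [if_neg h3, if_neg (by omega : ¬ 3 ∣ n.toNat)]
  · rw [if_neg hn]
    by_cases h3 : (3:ℤ) ∣ n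
    · rw [if_pos h3]
      simp only [gZ]
      rw [if_neg (by omega)]
    · rw [if_neg h3]

lemma lam_neg_n (c n : ℤ) (hn : n < 0) : lam c n = 0 := by
  simp only [lam]; rw [if_neg (by omega)]

lemma Lfun_neg_n (c n : ℤ) (hn : n < 0) : Lfun c n = 0 := by
  simp only [Lfun]
  by_cases h3 : (3:ℤ) ∣ (n - c)
  · rw [if_pos h3]
    simp only [gZ]
    rw [if_neg (by omega)]
  · rw [if_neg h3]

lemma main_eq : ∀ (m : ℕ) (c : ℤ), Lfun c (m : ℤ) = lam c (m : ℤ) := by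
  intro m
  induction m using Nat.strong_induction_on with
  | _ m IH =>
    have IH' : ∀ n' : ℤ, n' < (m : ℤ) → ∀ c : ℤ, Lfun c n' = lam c n' := by
      intro n' hn' c
      by_cases h0 : 0 ≤ n'
      · obtain ⟨m', rfl⟩ : ∃ m' : ℕ, n' = (m' : ℤ) := ⟨n'.toNat, by omega⟩
        exact IH m' (by omega) c
      · rw [Lfun_neg_n c n' (by omega), lam_neg_n c n' (by omega)]
    intro c
    rcases eq_or_ne c 0 with rfl | hc0
    · exact Lfun_zero_eq m
    rcases Nat.eq_zero_or_pos m with rfl | hm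
    · -- n = 0, c ≠ 0
      rw [show ((0:ℕ):ℤ) = 0 by norm_num, lam_zero_of_ne c hc0]
      simp only [Lfun]
      by_cases h3 : (3:ℤ) ∣ (0 - c)
      · rw [if_pos h3]
        simp only [gZ]
        rw [if_neg (by omega)]
      · rw [if_neg h3]
    · have hm1 : (1:ℤ) ≤ (m:ℤ) := by exact_mod_cast hm
      rcases lt_or_gt_of_ne hc0 with hc | hc
      · rw [Lfun_rec c m hm1, lam_rec_neg c m (by omega) (by positivity),
          if_neg (by omega), IH' _ (by omega) _, IH' _ (by omega) _]
        ring
      · rw [Lfun_rec c m hm1, lam_rec_pos c m (by omega) (by positivity),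
          if_pos (by omega), IH' _ (by omega) _, IH' _ (by omega) _, IH' _ (by omega) _]

end MainInduction
section Final

lemma coeff_mul_invOfUnit (G A : PowerSeries ℤ)
    (hA : PowerSeries.constantCoeff (R := ℤ) A = 0) (n : ℕ) :
    PowerSeries.coeff (R := ℤ) n (G * (1 - A).invOfUnit 1) =
      ∑ c ∈ Finset.range (n + 1), PowerSeries.coeff (R := ℤ) n (G * A ^ c) := by
  set I := (1 - A).invOfUnit 1 with hI
  have hu : PowerSeries.constantCoeff (R := ℤ) (1 - A) = ((1 : ℤˣ) : ℤ) := by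
    rw [map_sub, map_one, hA]; norm_num
  have hinv : (1 - A) * I = 1 := PowerSeries.mul_invOfUnit _ _ hu
  obtain ⟨B, hB⟩ : (PowerSeries.X : PowerSeries ℤ) ∣ A := PowerSeries.X_dvd_iff.2 hA
  set S := ∑ c ∈ Finset.range (n + 1), A ^ c with hS
  have key : S * (1 - A) = 1 - A ^ (n + 1) := by
    have h := geom_sum_mul A (n + 1)
    rw [hS]
    linear_combination -h
  have e1 : G * I = G * S + A ^ (n + 1) * (G * I) := by
    linear_combination (G * S) * hinv - (G * I) * key
  have e2 : PowerSeries.coeff (R := ℤ) n (A ^ (n + 1) * (G * I)) = 0 := by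
    rw [hB, mul_pow, mul_assoc, PowerSeries.coeff_X_pow_mul', if_neg (by omega)]
  rw [e1, map_add, e2, add_zero, hS, Finset.mul_sum, map_sum]

lemma lam_coe (c n : ℕ) :
    lam (c : ℤ) (n : ℤ) =
      PowerSeries.coeff (R := ℤ) n (subCube FGF * (PowerSeries.X * subCube schroederGF) ^ c) := by
  simp only [lam]
  rw [if_pos (by positivity), Phi_nonneg _ (by positivity)]
  simp

lemma lam_neg_coe (c n : ℕ) :
    lam (-(c : ℤ)) (n : ℤ) =
      PowerSeries.coeff (R := ℤ) n (subCube FGF * (PowerSeries.X ^ 2 * subCube catalanGF) ^ c) := by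
  simp only [lam]
  rw [if_pos (by positivity)]
  rcases Nat.eq_zero_or_pos c with rfl | hc
  · rw [show (-(0:ℕ):ℤ) = 0 by norm_num, Phi_nonneg 0 le_rfl]
    simp
  · rw [Phi_neg _ (by omega)]
    simp

lemma lam0_coe (n : ℕ) : lam 0 (n : ℤ) = PowerSeries.coeff (R := ℤ) n (subCube FGF) := by
  simp only [lam]
  rw [if_pos (by positivity), Phi_nonneg 0 le_rfl]
  simp

lemma Lfun_eval (i n : ℕ) (h2 : 2 * i ≤ n) :
    Lfun ((n : ℤ) - 3 * i) (n : ℤ) = (Nat.card (LCS i (n - 2 * i)) : ℤ) := by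
  simp only [Lfun]
  rw [if_pos ⟨(i : ℤ), by ring⟩]
  have e1 : ((n : ℤ) - ((n : ℤ) - 3 * i)) / 3 = (i : ℤ) := by omega
  have e2 : ((n : ℤ) + 2 * ((n : ℤ) - 3 * i)) / 3 = (n : ℤ) - 2 * i := by omega
  rw [e1, e2]
  simp only [gZ]
  rw [if_pos ⟨by positivity, by omega⟩]
  have ei : (i : ℤ).toNat = i := by omega
  have ej : ((n : ℤ) - 2 * i).toNat = n - 2 * i := by omega
  rw [ei, ej]

lemma sum_pos_eq (n : ℕ) :
    ∑ c ∈ Finset.range (n + 1), Lfun (c : ℤ) (n : ℤ) =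
      ∑ i ∈ Finset.range (n / 3 + 1), (Nat.card (LCS i (n - 2 * i)) : ℤ) := by
  have hinj : ∀ x ∈ Finset.range (n / 3 + 1), ∀ y ∈ Finset.range (n / 3 + 1),
      n - 3 * x = n - 3 * y → x = y := by
    intro x hx y hy hxy
    simp only [Finset.mem_range] at hx hy
    omega
  have himg := Finset.sum_image (f := fun c : ℕ => Lfun (c : ℤ) (n : ℤ))
    (g := fun i => n - 3 * i) (s := Finset.range (n / 3 + 1)) hinj
  have hsub : (Finset.range (n / 3 + 1)).image (fun i => n - 3 * i) ⊆
      Finset.range (n + 1) := by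
    intro c hc
    simp only [Finset.mem_image, Finset.mem_range] at hc ⊢
    omega
  have hvan : ∀ c ∈ Finset.range (n + 1),
      c ∉ (Finset.range (n / 3 + 1)).image (fun i => n - 3 * i) →
        Lfun (c : ℤ) (n : ℤ) = 0 := by
    intro c hc hnc
    simp only [Finset.mem_range] at hc
    by_contra h
    simp only [Lfun] at h
    by_cases h3 : (3 : ℤ) ∣ ((n : ℤ) - c)
    · rw [if_pos h3] at h
      simp only [gZ] at h
      by_cases hij : 0 ≤ ((n : ℤ) - c) / 3 ∧ 0 ≤ ((n : ℤ) + 2 * c) / 3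
      · apply hnc
        simp only [Finset.mem_image, Finset.mem_range]
        exact ⟨(((n : ℤ) - c) / 3).toNat, by omega, by omega⟩
      · rw [if_neg hij] at h
        exact h rfl
    · rw [if_neg h3] at h
      exact h rfl
  rw [← Finset.sum_subset hsub hvan, himg]
  refine Finset.sum_congr rfl ?_
  intro i hi
  simp only [Finset.mem_range] at hi
  have hc : ((n - 3 * i : ℕ) : ℤ) = (n : ℤ) - 3 * i := by omega
  show Lfun ((n - 3 * i : ℕ) : ℤ) (n : ℤ) = _
  rw [hc, Lfun_eval i n (by omega)]

lemma sum_neg_eq (n : ℕ) :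
    ∑ c ∈ Finset.range (n + 1), Lfun (-(c : ℤ)) (n : ℤ) =
      ∑ i ∈ (Finset.range (n / 2 + 1)).filter (fun i => n ≤ 3 * i),
        (Nat.card (LCS i (n - 2 * i)) : ℤ) := by
  have hinj : ∀ x ∈ (Finset.range (n / 2 + 1)).filter (fun i => n ≤ 3 * i),
      ∀ y ∈ (Finset.range (n / 2 + 1)).filter (fun i => n ≤ 3 * i),
      3 * x - n = 3 * y - n → x = y := by
    intro x hx y hy hxy
    simp only [Finset.mem_filter, Finset.mem_range] at hx hy
    omega
  have himg := Finset.sum_image (f := fun c : ℕ => Lfun (-(c : ℤ)) (n : ℤ))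
    (g := fun i => 3 * i - n)
    (s := (Finset.range (n / 2 + 1)).filter (fun i => n ≤ 3 * i)) hinj
  have hsub : ((Finset.range (n / 2 + 1)).filter (fun i => n ≤ 3 * i)).image
      (fun i => 3 * i - n) ⊆ Finset.range (n + 1) := by
    intro c hc
    simp only [Finset.mem_image, Finset.mem_filter, Finset.mem_range] at hc ⊢
    omega
  have hvan : ∀ c ∈ Finset.range (n + 1),
      c ∉ ((Finset.range (n / 2 + 1)).filter (fun i => n ≤ 3 * i)).image
        (fun i => 3 * i - n) → Lfun (-(c : ℤ)) (n : ℤ) = 0 := by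
    intro c hc hnc
    simp only [Finset.mem_range] at hc
    by_contra h
    simp only [Lfun] at h
    by_cases h3 : (3 : ℤ) ∣ ((n : ℤ) - -(c : ℤ))
    · rw [if_pos h3] at h
      simp only [gZ] at h
      by_cases hij : 0 ≤ ((n : ℤ) - -(c : ℤ)) / 3 ∧ 0 ≤ ((n : ℤ) + 2 * -(c : ℤ)) / 3
      · apply hnc
        simp only [Finset.mem_image, Finset.mem_filter, Finset.mem_range]
        exact ⟨(((n : ℤ) + c) / 3).toNat, ⟨by omega, by omega⟩, by omega⟩
      · rw [if_neg hij] at h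
        exact h rfl
    · rw [if_neg h3] at h
      exact h rfl
  rw [← Finset.sum_subset hsub hvan, himg]
  refine Finset.sum_congr rfl ?_
  intro i hi
  simp only [Finset.mem_filter, Finset.mem_range] at hi
  have hc : (-(((3 * i - n : ℕ)) : ℤ)) = (n : ℤ) - 3 * i := by omega
  show Lfun (-((3 * i - n : ℕ) : ℤ)) (n : ℤ) = _
  rw [hc, Lfun_eval i n (by omega)]

lemma sum_diag_eq (n : ℕ) :
    Lfun 0 (n : ℤ) =
      ∑ i ∈ (Finset.range (n / 2 + 1)).filter (fun i => 3 * i = n),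
        (Nat.card (LCS i (n - 2 * i)) : ℤ) := by
  by_cases h3 : 3 ∣ n
  · have hf : (Finset.range (n / 2 + 1)).filter (fun i => 3 * i = n) = {n / 3} := by
      ext i
      simp only [Finset.mem_filter, Finset.mem_range, Finset.mem_singleton]
      omega
    rw [hf, Finset.sum_singleton]
    have h := Lfun_eval (n / 3) n (by omega)
    rw [show ((n : ℤ) - 3 * ((n / 3 : ℕ) : ℤ)) = 0 by omega] at h
    exact h
  · have hf : (Finset.range (n / 2 + 1)).filter (fun i => 3 * i = n) = ∅ := by
      ext i
      simp only [Finset.mem_filter, Finset.mem_range, Finset.notMem_empty, iff_false,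
        not_and]
      omega
    rw [hf, Finset.sum_empty]
    simp only [Lfun]
    rw [if_neg (by omega)]

end Final
/-- the total number of paths from (0,0) to the points (i, n−2i),
i = 0,…,⌊n/2⌋, in L_CS equals
[x^n] F(x³)·(1/(1 − x·S(x³)) + 1/(1 − x²·C(x³)) − 1). -/
theorem LCS_slope_total (n : ℕ) :
    ((∑ i ∈ Finset.range (n / 2 + 1), Nat.card ↥(LCS i (n - 2 * i))) : ℤ) =
      PowerSeries.coeff (R := ℤ) n
        (subCube FGF *
          ((1 - PowerSeries.X * subCube schroederGF).invOfUnit 1 +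
           (1 - PowerSeries.X ^ 2 * subCube catalanGF).invOfUnit 1 - 1)) := by
  classical
  have hSA : PowerSeries.constantCoeff (R := ℤ) (PowerSeries.X * subCube schroederGF) = 0 := by
    rw [map_mul, PowerSeries.constantCoeff_X, zero_mul]
  have hCA : PowerSeries.constantCoeff (R := ℤ) (PowerSeries.X ^ 2 * subCube catalanGF) = 0 := by
    rw [map_mul, map_pow, PowerSeries.constantCoeff_X]
    norm_num
  have hsplit : subCube FGF * ((1 - PowerSeries.X * subCube schroederGF).invOfUnit 1 +
      (1 - PowerSeries.X ^ 2 * subCube catalanGF).invOfUnit 1 - 1) =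
    subCube FGF * (1 - PowerSeries.X * subCube schroederGF).invOfUnit 1 +
      subCube FGF * (1 - PowerSeries.X ^ 2 * subCube catalanGF).invOfUnit 1 - subCube FGF := by
    ring
  rw [hsplit, map_sub, map_add, coeff_mul_invOfUnit _ _ hSA n, coeff_mul_invOfUnit _ _ hCA n]
  have hS : ∑ c ∈ Finset.range (n + 1),
      PowerSeries.coeff (R := ℤ) n (subCube FGF * (PowerSeries.X * subCube schroederGF) ^ c) =
      ∑ c ∈ Finset.range (n + 1), Lfun (c : ℤ) (n : ℤ) := by
    refine Finset.sum_congr rfl fun c _ => ?_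
    rw [← lam_coe]
    exact (main_eq n c).symm
  have hC : ∑ c ∈ Finset.range (n + 1),
      PowerSeries.coeff (R := ℤ) n (subCube FGF * (PowerSeries.X ^ 2 * subCube catalanGF) ^ c) =
      ∑ c ∈ Finset.range (n + 1), Lfun (-(c : ℤ)) (n : ℤ) := by
    refine Finset.sum_congr rfl fun c _ => ?_
    rw [← lam_neg_coe]
    exact (main_eq n (-(c : ℤ))).symm
  have hA0 : PowerSeries.coeff (R := ℤ) n (subCube FGF) = Lfun 0 (n : ℤ) := by
    rw [← lam0_coe]
    exact (main_eq n 0).symm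
  rw [hS, hC, hA0, sum_pos_eq, sum_neg_eq, sum_diag_eq]
  push_cast
  rw [← Finset.sum_filter_add_sum_filter_not (Finset.range (n / 2 + 1))
    (fun i => 3 * i ≤ n) (fun i => (Nat.card (LCS i (n - 2 * i)) : ℤ))]
  have hr : (Finset.range (n / 2 + 1)).filter (fun i => 3 * i ≤ n) =
      Finset.range (n / 3 + 1) := by
    ext i
    simp only [Finset.mem_filter, Finset.mem_range]
    omega
  have hsplit2 : ∑ i ∈ (Finset.range (n / 2 + 1)).filter (fun i => n ≤ 3 * i),
      (Nat.card (LCS i (n - 2 * i)) : ℤ) =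
      (∑ i ∈ (Finset.range (n / 2 + 1)).filter (fun i => 3 * i = n),
        (Nat.card (LCS i (n - 2 * i)) : ℤ)) +
      ∑ i ∈ (Finset.range (n / 2 + 1)).filter (fun i => ¬ 3 * i ≤ n),
        (Nat.card (LCS i (n - 2 * i)) : ℤ) := by
    rw [← Finset.sum_filter_add_sum_filter_not
      ((Finset.range (n / 2 + 1)).filter (fun i => n ≤ 3 * i))
      (fun i => 3 * i ≤ n) (fun i => (Nat.card (LCS i (n - 2 * i)) : ℤ))]
    congr 1
    · apply Finset.sum_congr _ (fun _ _ => rfl)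
      ext i
      simp only [Finset.mem_filter, Finset.mem_range]
      constructor
      · rintro ⟨⟨h1, h2⟩, h3⟩; exact ⟨h1, by omega⟩
      · rintro ⟨h1, h2⟩; exact ⟨⟨h1, by omega⟩, by omega⟩
    · apply Finset.sum_congr _ (fun _ _ => rfl)
      ext i
      simp only [Finset.mem_filter, Finset.mem_range]
      constructor
      · rintro ⟨⟨h1, h2⟩, h3⟩; exact ⟨h1, by omega⟩
      · rintro ⟨h1, h2⟩; exact ⟨⟨h1, by omega⟩, by omega⟩
  rw [hr, hsplit2]
  ring
end
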